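/- Unicellular LLT polynomials satisfy the modular law: for every modular triple (h_-, h, h_+) of Hessenberg functions on [n], (1+q)·LLT_h(z;q) = LLT_{h_+}(z;q) + q·LLT_{h_-}(z;q), where LLT_h(z;q) = Σ_{κ ∈ C(G_h)} z_κ q^{asc(κ)} is the sum over all colorings κ : [n] → ℙ of G_h, z_κ = z_{κ(1)}⋯z_{κ(n)}, and asc(κ) = #{{i,j} ∈ E(G_h) : j < i, κ(j) < κ(i)}. -/

import Mathlib

/-- `h` is a Hessenberg function on `[n] = {1, …, n}` (1-based). -/
def IsHessenberg (n : ℕ) (h : ℕ → ℕ) : Prop :=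
  (∀ j, 1 ≤ j → j ≤ n → j ≤ h j ∧ h j ≤ n) ∧
  (∀ j k, 1 ≤ j → j ≤ k → k ≤ n → h j ≤ h k)

/-- `(hm, h, hp)` is a modular triple of type (C). -/
def TypeC (n : ℕ) (hm h hp : ℕ → ℕ) : Prop :=
  ∃ d₀ d, 1 ≤ d₀ ∧ d₀ < d ∧ d < n ∧ h d = h (d + 1) ∧
    (∀ j, 1 ≤ j → j ≤ n → (h j = d ↔ j = d₀)) ∧
    (∀ j, hm j = if j = d₀ then d - 1 else h j) ∧
    (∀ j, hp j = if j = d₀ then d + 1 else h j)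

/-- `(hm, h, hp)` is a modular triple of type (R). -/
def TypeR (n : ℕ) (hm h hp : ℕ → ℕ) : Prop :=
  ∃ d', 1 ≤ d' ∧ d' < n ∧ h d' + 1 = h (d' + 1) ∧ h (d' + 1) ≠ d' + 1 ∧
    (∀ j, 1 ≤ j → j ≤ n → h j ≠ d') ∧
    (∀ j, hm j = if j = d' + 1 then h d' else h j) ∧
    (∀ j, hp j = if j = d' then h d' + 1 else h j)

/-- `(hm, h, hp)` is a modular triple of Hessenberg functions on `[n]`. -/
def IsModularTriple (n : ℕ) (hm h hp : ℕ → ℕ) : Prop :=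
  IsHessenberg n h ∧ (TypeC n hm h hp ∨ TypeR n hm h hp)

/-- The unicellular LLT polynomial `LLT_h(z; q) = Σ_{κ ∈ C(G_h)} z_κ q^{asc(κ)}`,
restricted to `N` variables (colorings `κ : [n] → [N]`); vertex `v : Fin n`
represents `v + 1 ∈ [n]`, color `c : Fin N` has variable `z c`. -/
def llt (n N : ℕ) (h : ℕ → ℕ) {R : Type*} [CommRing R] (q : R) (z : Fin N → R) : R :=
  ∑ κ : Fin n → Fin N,
    (∏ i : Fin n, z (κ i)) *
      q ^ ((Finset.univ.filter (fun p : Fin n × Fin n =>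
        (p.2 : ℕ) < (p.1 : ℕ) ∧ (p.1 : ℕ) + 1 ≤ h ((p.2 : ℕ) + 1) ∧ κ p.2 < κ p.1)).card)



/-- The edge set of the indifference graph (0-based pairs `(i,j)` with `j < i ≤ h(j)`). -/
def EdgesH (n : ℕ) (h : ℕ → ℕ) : Finset (Fin n × Fin n) :=
  Finset.univ.filter fun p => (p.2 : ℕ) < (p.1 : ℕ) ∧ (p.1 : ℕ) + 1 ≤ h ((p.2 : ℕ) + 1)

/-- Number of ascents of a coloring on an edge set. -/
def ascK {n N : ℕ} (κ : Fin n → Fin N) (E : Finset (Fin n × Fin n)) : ℕ :=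
  (E.filter fun p => κ p.2 < κ p.1).card

lemma mem_EdgesH {n : ℕ} {h : ℕ → ℕ} {p : Fin n × Fin n} :
    p ∈ EdgesH n h ↔ (p.2 : ℕ) < (p.1 : ℕ) ∧ (p.1 : ℕ) + 1 ≤ h ((p.2 : ℕ) + 1) := by
  simp [EdgesH]

lemma llt_eq (n N : ℕ) (h : ℕ → ℕ) {R : Type*} [CommRing R] (q : R) (z : Fin N → R) :
    llt n N h q z = ∑ κ : Fin n → Fin N, (∏ i, z (κ i)) * q ^ ascK κ (EdgesH n h) := by
  simp only [llt, ascK, EdgesH, Finset.filter_filter, and_assoc]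

lemma ascK_insert {n N : ℕ} (κ : Fin n → Fin N) {p : Fin n × Fin n}
    {E : Finset (Fin n × Fin n)} (hp : p ∉ E) :
    ascK κ (insert p E) = ascK κ E + (if κ p.2 < κ p.1 then 1 else 0) := by
  unfold ascK
  rw [Finset.filter_insert]
  split
  · rw [Finset.card_insert_of_notMem (fun hmem => hp (Finset.mem_of_mem_filter _ hmem))]
  · simp

lemma core {R : Type*} [CommRing R] (n N : ℕ) (q : R) (z : Fin N → R)
    (E : Finset (Fin n × Fin n)) (a b : Fin n) (P₁ P₂ : Fin n × Fin n)
    (hΦ : ∀ p ∈ E, ((Equiv.swap a b p.1, Equiv.swap a b p.2) : Fin n × Fin n) ∈ E)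
    (hΦ1 : Equiv.swap a b P₁.1 = P₂.1) (hΦ2 : Equiv.swap a b P₁.2 = P₂.2)
    (hmono : ∀ κ : Fin n → Fin N, κ a ≤ κ b → κ P₁.2 < κ P₁.1 → κ P₂.2 < κ P₂.1) :
    (1 + q) * ∑ κ : Fin n → Fin N, (∏ i, z (κ i)) *
        q ^ (ascK κ E + (if κ a < κ b then 1 else 0) + (if κ P₁.2 < κ P₁.1 then 1 else 0))
      = (∑ κ : Fin n → Fin N, (∏ i, z (κ i)) *
          q ^ (ascK κ E + (if κ a < κ b then 1 else 0) + (if κ P₁.2 < κ P₁.1 then 1 else 0)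
               + (if κ P₂.2 < κ P₂.1 then 1 else 0)))
        + q * ∑ κ : Fin n → Fin N, (∏ i, z (κ i)) *
            q ^ (ascK κ E + (if κ a < κ b then 1 else 0)) := by
  set τ := Equiv.swap a b with hτ
  set σ : (Fin n → Fin N) → (Fin n → Fin N) := fun κ => κ ∘ τ with hσdef
  have hσinv : Function.Involutive σ := by
    intro κ; funext i; simp [σ, τ, Equiv.swap_apply_self]
  have hZ : ∀ κ : Fin n → Fin N, (∏ i, z (σ κ i)) = ∏ i, z (κ i) := fun κ =>
    Equiv.prod_comp τ fun i => z (κ i)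
  have hasc : ∀ κ : Fin n → Fin N, ascK (σ κ) E = ascK κ E := by
    intro κ
    unfold ascK
    apply Finset.card_bij' (fun p _ => ((τ p.1, τ p.2) : Fin n × Fin n))
      (fun p _ => ((τ p.1, τ p.2) : Fin n × Fin n))
    · intro p hp
      rw [Finset.mem_filter] at hp ⊢
      exact ⟨hΦ p hp.1, hp.2⟩
    · intro p hp
      rw [Finset.mem_filter] at hp ⊢
      refine ⟨hΦ p hp.1, ?_⟩
      show κ (τ (τ p.2)) < κ (τ (τ p.1))
      simpa [τ, Equiv.swap_apply_self] using hp.2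
    · intro p hp; simp [τ, Equiv.swap_apply_self]
    · intro p hp; simp [τ, Equiv.swap_apply_self]
  set G : (Fin n → Fin N) → R := fun κ =>
    (∏ i, z (κ i)) * q ^ ascK κ E *
      ((1 + q) * q ^ ((if κ a < κ b then 1 else 0) + (if κ P₁.2 < κ P₁.1 then 1 else 0))
        - q ^ ((if κ a < κ b then 1 else 0) + (if κ P₁.2 < κ P₁.1 then 1 else 0)
               + (if κ P₂.2 < κ P₂.1 then 1 else 0))
        - q * q ^ (if κ a < κ b then 1 else 0)) with hG
  set H : (Fin n → Fin N) → R := fun κ => if κ a < κ b then G κ else 0 with hH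
  have key : ∀ κ : Fin n → Fin N, G κ = H κ - H (σ κ) := by
    intro κ
    have e1 : σ κ a = κ b := congrArg κ (Equiv.swap_apply_left a b)
    have e2 : σ κ b = κ a := congrArg κ (Equiv.swap_apply_right a b)
    have e3 : σ κ P₁.1 = κ P₂.1 := congrArg κ hΦ1
    have e4 : σ κ P₁.2 = κ P₂.2 := congrArg κ hΦ2
    have e5 : σ κ P₂.1 = κ P₁.1 := congrArg κ (by rw [← hΦ1]; exact Equiv.swap_apply_self _ _ _)
    have e6 : σ κ P₂.2 = κ P₁.2 := congrArg κ (by rw [← hΦ2]; exact Equiv.swap_apply_self _ _ _)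
    have hGσ : G (σ κ) = (∏ i, z (κ i)) * q ^ ascK κ E *
        ((1 + q) * q ^ ((if κ b < κ a then 1 else 0) + (if κ P₂.2 < κ P₂.1 then 1 else 0))
          - q ^ ((if κ b < κ a then 1 else 0) + (if κ P₂.2 < κ P₂.1 then 1 else 0)
                 + (if κ P₁.2 < κ P₁.1 then 1 else 0))
          - q * q ^ (if κ b < κ a then 1 else 0)) := by
      rw [hG]
      simp only [hZ, hasc, e1, e2, e3, e4, e5, e6]
    rcases lt_trichotomy (κ a) (κ b) with hlt | heq | hgt
    · have hn : ¬ (σ κ a < σ κ b) := by rw [e1, e2]; exact not_lt.2 hlt.le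
      rw [hH]
      simp only [if_pos hlt, if_neg hn]
      ring
    · have hn1 : ¬ (κ a < κ b) := by rw [heq]; exact lt_irrefl _
      have hn2 : ¬ (σ κ a < σ κ b) := by rw [e1, e2, heq]; exact lt_irrefl _
      rw [hH]
      simp only [if_neg hn1, if_neg hn2, sub_self]
      have hi : (κ P₁.2 < κ P₁.1) ↔ (κ P₂.2 < κ P₂.1) := by
        constructor
        · exact hmono κ heq.le
        · intro h2
          have := hmono (σ κ) (by rw [e1, e2, heq]) (by rw [e3, e4]; exact h2)
          rwa [e5, e6] at this
      rw [hG]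
      by_cases h1 : κ P₁.2 < κ P₁.1
      · simp only [if_pos h1, if_pos (hi.1 h1), if_neg hn1]
        ring
      · simp only [if_neg h1, if_neg (fun h2 => h1 (hi.2 h2)), if_neg hn1]
        ring
    · have hn1 : ¬ (κ a < κ b) := not_lt.2 hgt.le
      have hp2 : σ κ a < σ κ b := by rw [e1, e2]; exact hgt
      have hmono' : κ P₂.2 < κ P₂.1 → κ P₁.2 < κ P₁.1 := by
        intro h2
        have := hmono (σ κ) (by rw [e1, e2]; exact hgt.le) (by rw [e3, e4]; exact h2)
        rwa [e5, e6] at this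
      rw [hH]
      simp only [if_neg hn1, if_pos hp2, zero_sub]
      rw [hGσ]
      simp only [hG]
      by_cases h1 : κ P₁.2 < κ P₁.1 <;> by_cases h2 : κ P₂.2 < κ P₂.1
      · simp only [if_pos h1, if_pos h2, if_neg hn1, if_pos hgt]; ring
      · simp only [if_pos h1, if_neg h2, if_neg hn1, if_pos hgt]; ring
      · exact absurd (hmono' h2) h1
      · simp only [if_neg h1, if_neg h2, if_neg hn1, if_pos hgt]; ring
  have hsum : ∑ κ : Fin n → Fin N, H (σ κ) = ∑ κ : Fin n → Fin N, H κ :=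
    Fintype.sum_bijective σ hσinv.bijective _ _ (fun κ => rfl)
  have hzero : ∑ κ : Fin n → Fin N, G κ = 0 := by
    calc ∑ κ : Fin n → Fin N, G κ = ∑ κ : Fin n → Fin N, (H κ - H (σ κ)) :=
          Finset.sum_congr rfl fun κ _ => key κ
      _ = (∑ κ : Fin n → Fin N, H κ) - ∑ κ : Fin n → Fin N, H (σ κ) := Finset.sum_sub_distrib _ _
      _ = 0 := by rw [hsum, sub_self]
  rw [← sub_eq_zero]
  calc _ = ∑ κ : Fin n → Fin N, G κ := by
        rw [Finset.mul_sum, Finset.mul_sum, ← Finset.sum_add_distrib, ← Finset.sum_sub_distrib]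
        refine Finset.sum_congr rfl fun κ _ => ?_
        rw [hG]
        simp only [pow_add]
        ring
    _ = 0 := hzero

lemma modular_of_sets {R : Type*} [CommRing R] (n N : ℕ) (q : R) (z : Fin N → R)
    (hm h hp : ℕ → ℕ) (a b : Fin n) (P₁ P₂ : Fin n × Fin n)
    (hba : ((b, a) : Fin n × Fin n) ∈ EdgesH n hm)
    (hE2 : EdgesH n h = insert P₁ (EdgesH n hm)) (hP1 : P₁ ∉ EdgesH n hm)
    (hE3 : EdgesH n hp = insert P₂ (EdgesH n h)) (hP2 : P₂ ∉ EdgesH n h)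
    (hΦ : ∀ p ∈ (EdgesH n hm).erase (b, a),
      ((Equiv.swap a b p.1, Equiv.swap a b p.2) : Fin n × Fin n) ∈ (EdgesH n hm).erase (b, a))
    (hΦ1 : Equiv.swap a b P₁.1 = P₂.1) (hΦ2 : Equiv.swap a b P₁.2 = P₂.2)
    (hmono : ∀ κ : Fin n → Fin N, κ a ≤ κ b → κ P₁.2 < κ P₁.1 → κ P₂.2 < κ P₂.1) :
    (1 + q) * llt n N h q z = llt n N hp q z + q * llt n N hm q z := by
  set E := (EdgesH n hm).erase (b, a) with hE
  have hE1 : EdgesH n hm = insert (b, a) E := (Finset.insert_erase hba).symm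
  have hba' : ((b, a) : Fin n × Fin n) ∉ E := Finset.notMem_erase _ _
  have hascm : ∀ κ : Fin n → Fin N,
      ascK κ (EdgesH n hm) = ascK κ E + (if κ a < κ b then 1 else 0) := by
    intro κ; rw [hE1, ascK_insert κ hba']
  have hasch : ∀ κ : Fin n → Fin N,
      ascK κ (EdgesH n h) = ascK κ E + (if κ a < κ b then 1 else 0)
        + (if κ P₁.2 < κ P₁.1 then 1 else 0) := by
    intro κ; rw [hE2, ascK_insert κ hP1, hascm]
  have hascp : ∀ κ : Fin n → Fin N,
      ascK κ (EdgesH n hp) = ascK κ E + (if κ a < κ b then 1 else 0)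
        + (if κ P₁.2 < κ P₁.1 then 1 else 0) + (if κ P₂.2 < κ P₂.1 then 1 else 0) := by
    intro κ; rw [hE3, ascK_insert κ hP2, hasch]
  rw [llt_eq, llt_eq, llt_eq]
  simp only [hascm, hasch, hascp]
  exact core n N q z E a b P₁ P₂ hΦ hΦ1 hΦ2 hmono

lemma typeC_case {R : Type*} [CommRing R] (n N : ℕ) (q : R) (z : Fin N → R)
    (hm h hp : ℕ → ℕ) (hH : IsHessenberg n h) (hC : TypeC n hm h hp) :
    (1 + q) * llt n N h q z = llt n N hp q z + q * llt n N hm q z := by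
  obtain ⟨hdom, hmon⟩ := hH
  obtain ⟨d₀, d, h1, h2, h3, h4, h5, hmdef, hpdef⟩ := hC
  have hd₀ : h d₀ = d := (h5 d₀ (by omega) (by omega)).2 rfl
  have hdd : d + 1 ≤ h (d + 1) := (hdom (d + 1) (by omega) (by omega)).1
  have pa : d - 1 < n := by omega
  have pb : d < n := h3
  have pc : d₀ - 1 < n := by omega
  set a : Fin n := ⟨d - 1, pa⟩ with hadef
  set b : Fin n := ⟨d, pb⟩ with hbdef
  set c : Fin n := ⟨d₀ - 1, pc⟩ with hcdef
  have hav : (a : ℕ) = d - 1 := rfl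
  have hbv : (b : ℕ) = d := rfl
  have hcv : (c : ℕ) = d₀ - 1 := rfl
  have hne_ab : a ≠ b := Fin.ne_of_val_ne (by rw [hav, hbv]; omega)
  refine modular_of_sets n N q z hm h hp a b (a, c) (b, c) ?_ ?_ ?_ ?_ ?_ ?_ ?_ ?_ ?_
  · -- hba
    simp only [mem_EdgesH, hav, hbv]
    refine ⟨by omega, ?_⟩
    rw [show d - 1 + 1 = d from by omega, hmdef, if_neg (by omega : ¬ d = d₀), h4]
    exact hdd
  · -- hE2
    ext ⟨i, j⟩
    simp only [Finset.mem_insert, mem_EdgesH, Prod.mk.injEq, Fin.ext_iff, hav, hbv, hcv]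
    by_cases hc : (j : ℕ) + 1 = d₀
    · rw [hmdef, if_pos hc, show h ((j : ℕ) + 1) = d from by rw [hc, hd₀]]
      omega
    · rw [hmdef, if_neg hc]
      constructor
      · exact Or.inr
      · rintro (⟨hi, hj⟩ | hh)
        · exact absurd (by omega : (j : ℕ) + 1 = d₀) hc
        · exact hh
  · -- hP1
    intro hmem
    simp only [mem_EdgesH, hav, hcv] at hmem
    obtain ⟨hx, hy⟩ := hmem
    rw [show d₀ - 1 + 1 = d₀ from by omega, hmdef, if_pos rfl] at hy
    omega
  · -- hE3
    ext ⟨i, j⟩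
    simp only [Finset.mem_insert, mem_EdgesH, Prod.mk.injEq, Fin.ext_iff, hav, hbv, hcv]
    by_cases hc : (j : ℕ) + 1 = d₀
    · rw [hpdef, if_pos hc, show h ((j : ℕ) + 1) = d from by rw [hc, hd₀]]
      omega
    · rw [hpdef, if_neg hc]
      constructor
      · exact Or.inr
      · rintro (⟨hi, hj⟩ | hh)
        · exact absurd (by omega : (j : ℕ) + 1 = d₀) hc
        · exact hh
  · -- hP2
    intro hmem
    simp only [mem_EdgesH, hbv, hcv] at hmem
    obtain ⟨hx, hy⟩ := hmem
    rw [show d₀ - 1 + 1 = d₀ from by omega, hd₀] at hy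
    omega
  · -- hΦ
    rintro ⟨i, j⟩ hpmem
    simp only [Finset.mem_erase, mem_EdgesH] at hpmem
    obtain ⟨hpne, hji, hhm⟩ := hpmem
    simp only [Finset.mem_erase, mem_EdgesH]
    have hjn : (j : ℕ) < n := j.isLt
    by_cases hia : i = a
    · have hji' : (j : ℕ) < d - 1 := by rw [hia, hav] at hji; exact hji
      have hja : j ≠ a := Fin.ne_of_val_ne (by rw [hav]; omega)
      have hjb : j ≠ b := Fin.ne_of_val_ne (by rw [hbv]; omega)
      rw [hia, Equiv.swap_apply_left, Equiv.swap_apply_of_ne_of_ne hja hjb]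
      have hhm' : d - 1 + 1 ≤ hm ((j : ℕ) + 1) := by rw [hia, hav] at hhm; exact hhm
      have hcnd : d + 1 ≤ hm ((j : ℕ) + 1) := by
        by_cases hc : (j : ℕ) + 1 = d₀
        · exfalso; rw [hmdef, if_pos hc] at hhm'; omega
        · have hnd : h ((j : ℕ) + 1) ≠ d := fun he => hc ((h5 _ (by omega) (by omega)).1 he)
          rw [hmdef, if_neg hc] at hhm' ⊢
          omega
      refine ⟨fun he => hja (congrArg Prod.snd he), ?_, ?_⟩
      · rw [hbv]; omega
      · rw [hbv]; exact hcnd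
    · by_cases hib : i = b
      · have hja : j ≠ a := fun he => hpne (by rw [hib, he])
        have hji' : (j : ℕ) < d := by rw [hib, hbv] at hji; exact hji
        have hjav : (j : ℕ) ≠ d - 1 := fun he => hja (Fin.ext (show (j : ℕ) = (a : ℕ) by rw [hav]; exact he))
        have hjb : j ≠ b := Fin.ne_of_val_ne (by rw [hbv]; omega)
        rw [hib, Equiv.swap_apply_right, Equiv.swap_apply_of_ne_of_ne hja hjb]
        have hhm' : d + 1 ≤ hm ((j : ℕ) + 1) := by rw [hib, hbv] at hhm; exact hhm
        refine ⟨fun he => hne_ab (congrArg Prod.fst he), ?_, ?_⟩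
        · rw [hav]; omega
        · rw [hav]; omega
      · by_cases hja : j = a
        · have hiv : d < (i : ℕ) := by
            have q1 : d - 1 < (i : ℕ) := by rw [hja, hav] at hji; exact hji
            have q2 : (i : ℕ) ≠ d - 1 := fun he => hia (Fin.ext (show (i : ℕ) = (a : ℕ) by rw [hav]; exact he))
            have q3 : (i : ℕ) ≠ d := fun he => hib (Fin.ext (show (i : ℕ) = (b : ℕ) by rw [hbv]; exact he))
            omega
          rw [hja, Equiv.swap_apply_left, Equiv.swap_apply_of_ne_of_ne hia hib]
          have hhm' : (i : ℕ) + 1 ≤ hm (d - 1 + 1) := by rw [hja, hav] at hhm; exact hhm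
          rw [show d - 1 + 1 = d from by omega, hmdef, if_neg (by omega : ¬ d = d₀)] at hhm'
          refine ⟨fun he => hib (congrArg Prod.fst he), ?_, ?_⟩
          · rw [hbv]; omega
          · rw [hbv, hmdef, if_neg (by omega : ¬ d + 1 = d₀), ← h4]
            exact hhm'
        · by_cases hjb : j = b
          · have hiv : d < (i : ℕ) := by rw [hjb, hbv] at hji; exact hji
            rw [hjb, Equiv.swap_apply_right, Equiv.swap_apply_of_ne_of_ne hia hib]
            have hhm' : (i : ℕ) + 1 ≤ hm (d + 1) := by rw [hjb, hbv] at hhm; exact hhm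
            rw [hmdef, if_neg (by omega : ¬ d + 1 = d₀), ← h4] at hhm'
            refine ⟨fun he => hib (congrArg Prod.fst he), ?_, ?_⟩
            · rw [hav]; omega
            · rw [hav, show d - 1 + 1 = d from by omega, hmdef, if_neg (by omega : ¬ d = d₀)]
              exact hhm'
          · rw [Equiv.swap_apply_of_ne_of_ne hia hib, Equiv.swap_apply_of_ne_of_ne hja hjb]
            exact ⟨hpne, hji, hhm⟩
  · -- hΦ1
    exact Equiv.swap_apply_left a b
  · -- hΦ2
    exact Equiv.swap_apply_of_ne_of_ne (Fin.ne_of_val_ne (by rw [hcv, hav]; omega))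
      (Fin.ne_of_val_ne (by rw [hcv, hbv]; omega))
  · -- hmono
    intro κ hab h1'
    exact h1'.trans_le hab

lemma typeR_case {R : Type*} [CommRing R] (n N : ℕ) (q : R) (z : Fin N → R)
    (hm h hp : ℕ → ℕ) (hH : IsHessenberg n h) (hR : TypeR n hm h hp) :
    (1 + q) * llt n N h q z = llt n N hp q z + q * llt n N hm q z := by
  obtain ⟨hdom, hmon⟩ := hH
  obtain ⟨d', h1, h2, h3, h4, h5, hmdef, hpdef⟩ := hR
  have hge : d' + 1 ≤ h (d' + 1) := (hdom (d' + 1) (by omega) (by omega)).1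
  have hle : h (d' + 1) ≤ n := (hdom (d' + 1) (by omega) (by omega)).2
  have hm2 : d' + 2 ≤ h (d' + 1) := by omega
  have pa : d' - 1 < n := by omega
  have pb : d' < n := h2
  have pc : h (d' + 1) - 1 < n := by omega
  set a : Fin n := ⟨d' - 1, pa⟩ with hadef
  set b : Fin n := ⟨d', pb⟩ with hbdef
  set c : Fin n := ⟨h (d' + 1) - 1, pc⟩ with hcdef
  have hav : (a : ℕ) = d' - 1 := rfl
  have hbv : (b : ℕ) = d' := rfl
  have hcv : (c : ℕ) = h (d' + 1) - 1 := rfl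
  have hne_ab : a ≠ b := Fin.ne_of_val_ne (by rw [hav, hbv]; omega)
  refine modular_of_sets n N q z hm h hp a b (c, b) (c, a) ?_ ?_ ?_ ?_ ?_ ?_ ?_ ?_ ?_
  · -- hba
    simp only [mem_EdgesH, hav, hbv]
    refine ⟨by omega, ?_⟩
    rw [show d' - 1 + 1 = d' from by omega, hmdef, if_neg (by omega : ¬ d' = d' + 1)]
    omega
  · -- hE2
    ext ⟨i, j⟩
    simp only [Finset.mem_insert, mem_EdgesH, Prod.mk.injEq, Fin.ext_iff, hav, hbv, hcv]
    by_cases hc : (j : ℕ) + 1 = d' + 1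
    · rw [hmdef, if_pos hc, hc]
      omega
    · rw [hmdef, if_neg hc]
      constructor
      · exact Or.inr
      · rintro (⟨hi, hj⟩ | hh)
        · exact absurd (by omega : (j : ℕ) + 1 = d' + 1) hc
        · exact hh
  · -- hP1
    intro hmem
    simp only [mem_EdgesH, hbv, hcv] at hmem
    obtain ⟨hx, hy⟩ := hmem
    rw [hmdef, if_pos rfl] at hy
    omega
  · -- hE3
    ext ⟨i, j⟩
    simp only [Finset.mem_insert, mem_EdgesH, Prod.mk.injEq, Fin.ext_iff, hav, hbv, hcv]
    by_cases hc : (j : ℕ) + 1 = d'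
    · rw [hpdef, if_pos hc, hc]
      omega
    · rw [hpdef, if_neg hc]
      constructor
      · exact Or.inr
      · rintro (⟨hi, hj⟩ | hh)
        · exact absurd (by omega : (j : ℕ) + 1 = d') hc
        · exact hh
  · -- hP2
    intro hmem
    simp only [mem_EdgesH, hav, hcv] at hmem
    obtain ⟨hx, hy⟩ := hmem
    rw [show d' - 1 + 1 = d' from by omega] at hy
    omega
  · -- hΦ
    rintro ⟨i, j⟩ hpmem
    simp only [Finset.mem_erase, mem_EdgesH] at hpmem
    obtain ⟨hpne, hji, hhm⟩ := hpmem
    simp only [Finset.mem_erase, mem_EdgesH]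
    have hjn : (j : ℕ) < n := j.isLt
    by_cases hia : i = a
    · have hji' : (j : ℕ) < d' - 1 := by rw [hia, hav] at hji; exact hji
      have hja : j ≠ a := Fin.ne_of_val_ne (by rw [hav]; omega)
      have hjb : j ≠ b := Fin.ne_of_val_ne (by rw [hbv]; omega)
      rw [hia, Equiv.swap_apply_left, Equiv.swap_apply_of_ne_of_ne hja hjb]
      have hhm' : d' - 1 + 1 ≤ hm ((j : ℕ) + 1) := by rw [hia, hav] at hhm; exact hhm
      rw [hmdef, if_neg (by omega : ¬ (j : ℕ) + 1 = d' + 1)] at hhm'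
      have hnd : h ((j : ℕ) + 1) ≠ d' := h5 _ (by omega) (by omega)
      refine ⟨fun he => hja (congrArg Prod.snd he), ?_, ?_⟩
      · rw [hbv]; omega
      · rw [hbv, hmdef, if_neg (by omega : ¬ (j : ℕ) + 1 = d' + 1)]
        omega
    · by_cases hib : i = b
      · have hja : j ≠ a := fun he => hpne (by rw [hib, he])
        have hji' : (j : ℕ) < d' := by rw [hib, hbv] at hji; exact hji
        have hjav : (j : ℕ) ≠ d' - 1 := fun he => hja (Fin.ext (show (j : ℕ) = (a : ℕ) by rw [hav]; exact he))
        have hjb : j ≠ b := Fin.ne_of_val_ne (by rw [hbv]; omega)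
        rw [hib, Equiv.swap_apply_right, Equiv.swap_apply_of_ne_of_ne hja hjb]
        have hhm' : d' + 1 ≤ hm ((j : ℕ) + 1) := by rw [hib, hbv] at hhm; exact hhm
        refine ⟨fun he => hne_ab (congrArg Prod.fst he), ?_, ?_⟩
        · rw [hav]; omega
        · rw [hav]; omega
      · by_cases hja : j = a
        · have hiv : d' < (i : ℕ) := by
            have q1 : d' - 1 < (i : ℕ) := by rw [hja, hav] at hji; exact hji
            have q2 : (i : ℕ) ≠ d' - 1 := fun he => hia (Fin.ext (show (i : ℕ) = (a : ℕ) by rw [hav]; exact he))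
            have q3 : (i : ℕ) ≠ d' := fun he => hib (Fin.ext (show (i : ℕ) = (b : ℕ) by rw [hbv]; exact he))
            omega
          rw [hja, Equiv.swap_apply_left, Equiv.swap_apply_of_ne_of_ne hia hib]
          have hhm' : (i : ℕ) + 1 ≤ hm (d' - 1 + 1) := by rw [hja, hav] at hhm; exact hhm
          rw [show d' - 1 + 1 = d' from by omega, hmdef, if_neg (by omega : ¬ d' = d' + 1)] at hhm'
          refine ⟨fun he => hib (congrArg Prod.fst he), ?_, ?_⟩
          · rw [hbv]; omega
          · rw [hbv, hmdef, if_pos rfl]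
            exact hhm'
        · by_cases hjb : j = b
          · have hiv : d' < (i : ℕ) := by rw [hjb, hbv] at hji; exact hji
            rw [hjb, Equiv.swap_apply_right, Equiv.swap_apply_of_ne_of_ne hia hib]
            have hhm' : (i : ℕ) + 1 ≤ hm (d' + 1) := by rw [hjb, hbv] at hhm; exact hhm
            rw [hmdef, if_pos rfl] at hhm'
            refine ⟨fun he => hib (congrArg Prod.fst he), ?_, ?_⟩
            · rw [hav]; omega
            · rw [hav, show d' - 1 + 1 = d' from by omega, hmdef, if_neg (by omega : ¬ d' = d' + 1)]
              exact hhm'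
          · rw [Equiv.swap_apply_of_ne_of_ne hia hib, Equiv.swap_apply_of_ne_of_ne hja hjb]
            exact ⟨hpne, hji, hhm⟩
  · -- hΦ1
    exact Equiv.swap_apply_of_ne_of_ne (Fin.ne_of_val_ne (by rw [hcv, hav]; omega))
      (Fin.ne_of_val_ne (by rw [hcv, hbv]; omega))
  · -- hΦ2
    exact Equiv.swap_apply_right a b
  · -- hmono
    intro κ hab h1'
    exact hab.trans_lt h1'

/-- Unicellular LLT polynomials satisfy the modular law:
`(1+q)·LLT_h = LLT_{h₊} + q·LLT_{h₋}` for every modular triple. -/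
theorem llt_modular_law {R : Type*} [CommRing R] (n N : ℕ) (hm h hp : ℕ → ℕ)
    (hmt : IsModularTriple n hm h hp) (q : R) (z : Fin N → R) :
    (1 + q) * llt n N h q z = llt n N hp q z + q * llt n N hm q z := by
  obtain ⟨hH, hc | hr⟩ := hmt
  · exact typeC_case n N q z hm h hp hH hc
  · exact typeR_case n N q z hm h hp hH hr
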